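/- Suppose F ∈ ℍ[z] and γ ∈ ℍ are such that F has no left or right zeros in the conjugacy class [γ]. Then the polynomial (z−γ)F equals Q·(z−β) where β = (F^{eℓ}(\bar{γ}))⁻¹ γ F^{eℓ}(\bar{γ}), Q has no zeros in [γ], and moreover γ = F^{er}(β) β (F^{er}(β))⁻¹. -/

import Mathlib

open Polynomial

/-- Left evaluation of a quaternion polynomial: `f^{eℓ}(α) = Σ α^j f_j`. -/
noncomputable def levalQ (α : Quaternion ℝ) (f : Polynomial (Quaternion ℝ)) : Quaternion ℝ :=
  f.sum fun j a => α ^ j * a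

namespace Stmt12Aux

local notation "ℍ" => Quaternion ℝ

/-! ### basic `levalQ` lemmas -/

lemma levalQ_add (α : ℍ) (p q : ℍ[X]) :
    levalQ α (p + q) = levalQ α p + levalQ α q :=
  Polynomial.sum_add_index p q _ (fun i => by simp) (fun a b₁ b₂ => by rw [mul_add])

lemma levalQ_sub (α : ℍ) (p q : ℍ[X]) :
    levalQ α (p - q) = levalQ α p - levalQ α q := by
  have h := levalQ_add α (p - q) q
  rw [sub_add_cancel] at h
  rw [h, add_sub_cancel_right]

lemma levalQ_monomial (α c : ℍ) (n : ℕ) : levalQ α (monomial n c) = α ^ n * c := by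
  unfold levalQ
  rw [Polynomial.sum_monomial_index _ _ (by simp)]

lemma levalQ_C (α c : ℍ) : levalQ α (C c) = c := by
  rw [← Polynomial.monomial_zero_left, levalQ_monomial, pow_zero, one_mul]

lemma levalQ_X (α : ℍ) : levalQ α X = α := by
  rw [← Polynomial.monomial_one_one_eq_X, levalQ_monomial, pow_one, mul_one]

lemma levalQ_X_sub_C (α c : ℍ) : levalQ α (X - C c) = α - c := by
  rw [levalQ_sub, levalQ_C, levalQ_X]

lemma levalQ_C_mul_X (α s : ℍ) : levalQ α (C s * X) = α * s := by
  rw [Polynomial.C_mul_X_eq_monomial, levalQ_monomial, pow_one]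

lemma levalQ_mul_C (α c : ℍ) (p : ℍ[X]) : levalQ α (p * C c) = levalQ α p * c := by
  induction p using Polynomial.induction_on' with
  | add p q hp hq => rw [add_mul, levalQ_add, levalQ_add, hp, hq, add_mul]
  | monomial n a =>
      rw [show (monomial n a : ℍ[X]) * C c = monomial n (a * c) by
        rw [← Polynomial.monomial_zero_left, Polynomial.monomial_mul_monomial, add_zero],
        levalQ_monomial, levalQ_monomial, mul_assoc]

lemma levalQ_X_mul (α : ℍ) (p : ℍ[X]) : levalQ α (X * p) = α * levalQ α p := by
  induction p using Polynomial.induction_on' with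
  | add p q hp hq => rw [mul_add, levalQ_add, levalQ_add, hp, hq, mul_add]
  | monomial n a =>
      rw [Polynomial.X_mul, Polynomial.monomial_mul_X, levalQ_monomial, levalQ_monomial,
        pow_succ', mul_assoc]

lemma levalQ_X_pow_mul (α : ℍ) (k : ℕ) (p : ℍ[X]) :
    levalQ α (X ^ k * p) = α ^ k * levalQ α p := by
  induction k with
  | zero => simp
  | succ k ih =>
      have h1 : X ^ (k + 1) * p = X * (X ^ k * p) := by rw [pow_succ', mul_assoc]
      rw [h1, levalQ_X_mul, ih, ← mul_assoc, ← pow_succ']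

/-- Raw left-evaluation product formula. -/
lemma levalQ_mul (α : ℍ) (p q : ℍ[X]) :
    levalQ α (p * q) = q.sum fun k qk => α ^ k * levalQ α p * qk := by
  induction q using Polynomial.induction_on' with
  | add q r hq hr =>
      rw [mul_add, levalQ_add, hq, hr,
        Polynomial.sum_add_index q r _ (fun i => by simp) (fun a b₁ b₂ => by rw [mul_add])]
  | monomial n c =>
      rw [Polynomial.sum_monomial_index _ _ (by simp)]
      have h1 : p * monomial n c = X ^ n * p * C c := by
        rw [← Polynomial.C_mul_X_pow_eq_monomial, ← Polynomial.X_pow_mul, ← mul_assoc,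
          ← Polynomial.X_pow_mul]
      rw [h1, levalQ_mul_C, levalQ_X_pow_mul]

/-- Conjugated left-evaluation product formula. -/
lemma levalQ_mul_conj (α α' u : ℍ) (p q : ℍ[X]) (hu : levalQ α p = u)
    (hc : α * u = u * α') : levalQ α (p * q) = u * levalQ α' q := by
  have hpow : ∀ k : ℕ, α ^ k * u = u * α' ^ k := by
    intro k
    induction k with
    | zero => simp
    | succ k ih =>
        rw [pow_succ, pow_succ, mul_assoc, hc, ← mul_assoc, ih, mul_assoc]
  rw [levalQ_mul, hu]
  unfold levalQ Polynomial.sum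
  rw [Finset.mul_sum]
  refine Finset.sum_congr rfl fun k _ => ?_
  show α ^ k * u * q.coeff k = u * (α' ^ k * q.coeff k)
  rw [← mul_assoc, hpow k, mul_assoc]

/-- Left evaluation of `p * (X - C c)`. -/
lemma levalQ_mul_X_sub_C (α c : ℍ) (p : ℍ[X]) :
    levalQ α (p * (X - C c)) = α * levalQ α p - levalQ α p * c := by
  rw [mul_sub, levalQ_sub, ← Polynomial.X_mul, levalQ_X_mul, levalQ_mul_C]

/-! ### right evaluation lemmas -/

/-- Raw right-evaluation product formula. -/
lemma eval_mul_sum (x : ℍ) (p q : ℍ[X]) :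
    (p * q).eval x = p.sum fun j pj => pj * q.eval x * x ^ j := by
  induction p using Polynomial.induction_on' with
  | add p r hp hr =>
      rw [add_mul, eval_add, hp, hr,
        Polynomial.sum_add_index p r _ (fun i => by simp) (fun a b₁ b₂ => by rw [add_mul, add_mul])]
  | monomial n c =>
      rw [Polynomial.sum_monomial_index _ _ (by simp)]
      rw [show (monomial n c : ℍ[X]) = C c * X ^ n from (Polynomial.C_mul_X_pow_eq_monomial).symm]
      rw [mul_assoc, Polynomial.X_pow_mul, ← mul_assoc, eval_mul_X_pow, eval_C_mul]

/-- Conjugated right-evaluation product formula. -/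
lemma eval_mul_conj (x x' v : ℍ) (p q : ℍ[X]) (hv : q.eval x = v)
    (hc : x' * v = v * x) : (p * q).eval x = p.eval x' * v := by
  have hpow : ∀ j : ℕ, x' ^ j * v = v * x ^ j := by
    intro j
    induction j with
    | zero => simp
    | succ j ih =>
        rw [pow_succ, pow_succ, mul_assoc, hc, ← mul_assoc, ih, mul_assoc]
  rw [eval_mul_sum, hv, Polynomial.eval_eq_sum]
  unfold Polynomial.sum
  rw [Finset.sum_mul]
  refine Finset.sum_congr rfl fun j _ => ?_
  show p.coeff j * v * x ^ j = p.coeff j * x' ^ j * v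
  rw [mul_assoc, ← hpow j, ← mul_assoc]

/-! ### factoring out roots -/

lemma exists_geom_right (a : ℍ) (k : ℕ) :
    ∃ g : ℍ[X], g * (X - C a) = X ^ k - C (a ^ k) := by
  induction k with
  | zero => exact ⟨0, by simp⟩
  | succ k ih =>
      obtain ⟨g, hg⟩ := ih
      refine ⟨X ^ k + g * C a, ?_⟩
      have hcomm : C a * (X - C a) = (X - C a) * C a := by
        rw [mul_sub, sub_mul, Polynomial.X_mul]
      rw [add_mul, mul_assoc, hcomm, ← mul_assoc, hg, sub_mul, mul_sub,
        ← Polynomial.C_mul, ← pow_succ, ← pow_succ]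
      abel

lemma exists_geom_left (a : ℍ) (k : ℕ) :
    ∃ g : ℍ[X], (X - C a) * g = X ^ k - C (a ^ k) := by
  induction k with
  | zero => exact ⟨0, by simp⟩
  | succ k ih =>
      obtain ⟨g, hg⟩ := ih
      refine ⟨X ^ k + C a * g, ?_⟩
      have hcomm : (X - C a) * C a = C a * (X - C a) := by
        rw [mul_sub, sub_mul, Polynomial.X_mul]
      rw [mul_add, ← mul_assoc, hcomm, mul_assoc, hg, mul_sub, sub_mul,
        ← Polynomial.C_mul, ← pow_succ', ← pow_succ']
      abel

/-- Factor out a right root. -/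
lemma exists_factor_right (p : ℍ[X]) (a : ℍ) :
    ∃ q : ℍ[X], p = q * (X - C a) + C (p.eval a) := by
  induction p using Polynomial.induction_on' with
  | add p r hp hr =>
      obtain ⟨qp, hqp⟩ := hp
      obtain ⟨qr, hqr⟩ := hr
      refine ⟨qp + qr, ?_⟩
      rw [eval_add, Polynomial.C_add, add_mul]
      calc p + r = qp * (X - C a) + C (p.eval a) + (qr * (X - C a) + C (r.eval a)) := by
            rw [← hqp, ← hqr]
        _ = _ := by abel
  | monomial n c =>
      obtain ⟨g, hg⟩ := exists_geom_right a n
      refine ⟨C c * g, ?_⟩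
      rw [eval_monomial, mul_assoc, hg, mul_sub, ← Polynomial.C_mul,
        ← Polynomial.C_mul_X_pow_eq_monomial]
      abel

/-- Factor out a left root (w.r.t. left evaluation). -/
lemma exists_factor_left (p : ℍ[X]) (a : ℍ) :
    ∃ q : ℍ[X], p = (X - C a) * q + C (levalQ a p) := by
  induction p using Polynomial.induction_on' with
  | add p r hp hr =>
      obtain ⟨qp, hqp⟩ := hp
      obtain ⟨qr, hqr⟩ := hr
      refine ⟨qp + qr, ?_⟩
      rw [levalQ_add, Polynomial.C_add, mul_add]
      calc p + r = (X - C a) * qp + C (levalQ a p) + ((X - C a) * qr + C (levalQ a r)) := by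
            rw [← hqp, ← hqr]
        _ = _ := by abel
  | monomial n c =>
      obtain ⟨g, hg⟩ := exists_geom_left a n
      refine ⟨g * C c, ?_⟩
      have h1 : (monomial n c : ℍ[X]) = X ^ n * C c := by
        rw [← Polynomial.C_mul_X_pow_eq_monomial, ← Polynomial.X_pow_mul]
      rw [levalQ_monomial, ← mul_assoc, hg, sub_mul, ← Polynomial.C_mul, h1]
      abel

/-- Expansion of a product of two linear factors. -/
lemma lin_mul_lin (s c : ℍ) :
    (X - C s) * (X - C c) = X ^ 2 - C (s + c) * X + C (s * c) := by
  rw [sub_mul, mul_sub, mul_sub, Polynomial.X_mul (p := C c), Polynomial.C_add, add_mul,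
    Polynomial.C_mul, ← sq]
  abel

/-! ### quaternion lemmas -/

lemma selfstar_commute (q : ℍ) (hq : star q = q) (z : ℍ) : Commute q z := by
  rw [Quaternion.star_eq_self] at hq
  rw [hq]
  exact Quaternion.coe_commutes q.re z

lemma re_mul_comm (a b : ℍ) : (a * b).re = (b * a).re := by
  simp only [Quaternion.re_mul]; ring

lemma conj_trace (γ h : ℍ) (hh : h ≠ 0) :
    h⁻¹ * γ * h + star (h⁻¹ * γ * h) = γ + star γ := by
  rw [Quaternion.self_add_star', Quaternion.self_add_star']
  have : (h⁻¹ * γ * h).re = γ.re := by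
    rw [mul_assoc, re_mul_comm, mul_assoc, mul_inv_cancel₀ hh, mul_one]
  rw [this]

lemma conj_normSq (γ h : ℍ) (hh : h ≠ 0) :
    star (h⁻¹ * γ * h) * (h⁻¹ * γ * h) = star γ * γ := by
  rw [Quaternion.star_mul_self, Quaternion.star_mul_self]
  congr 1
  rw [map_mul, map_mul, map_inv₀]
  have h1 : Quaternion.normSq h ≠ 0 := Quaternion.normSq_ne_zero.2 hh
  field_simp

lemma conj_pow (u γ : ℍ) (hu : u ≠ 0) (k : ℕ) :
    (u⁻¹ * γ * u) ^ k = u⁻¹ * γ ^ k * u := by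
  induction k with
  | zero => simp [inv_mul_cancel₀ hu]
  | succ k ih =>
      rw [pow_succ, ih, pow_succ]
      simp only [mul_assoc]
      rw [← mul_assoc u u⁻¹, mul_inv_cancel₀ hu, one_mul]

/-- Every quaternion is conjugate to its own conjugate. -/
lemma star_conj_exists (q : ℍ) : ∃ h : ℍ, h ≠ 0 ∧ star q = h⁻¹ * q * h := by
  have key : ∀ h : ℍ, h ≠ 0 → q * h = h * star q → star q = h⁻¹ * q * h := by
    intro h hh hqh
    rw [mul_assoc, hqh, ← mul_assoc, inv_mul_cancel₀ hh, one_mul]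
  by_cases hij : q.imI = 0 ∧ q.imJ = 0
  · refine ⟨⟨0, 1, 0, 0⟩, ?_, key _ ?_ ?_⟩
    · intro h0
      have := congrArg QuaternionAlgebra.imI h0
      simp [Quaternion.imI_zero] at this
    · intro h0
      have := congrArg QuaternionAlgebra.imI h0
      simp [Quaternion.imI_zero] at this
    · show q * (Quaternion.equivTuple ℝ).symm ![0, 1, 0, 0] = (Quaternion.equivTuple ℝ).symm ![0, 1, 0, 0] * star q
      apply Quaternion.ext <;>
        simp only [Quaternion.re_mul, Quaternion.imI_mul, Quaternion.imJ_mul, Quaternion.imK_mul] <;> simp [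
          hij.1, hij.2]
  · refine ⟨⟨0, q.imJ, -q.imI, 0⟩, ?_, key _ ?_ ?_⟩
    · intro h0
      apply hij
      constructor
      · have := congrArg QuaternionAlgebra.imJ h0
        simpa [Quaternion.imJ_zero] using this
      · have := congrArg QuaternionAlgebra.imI h0
        simpa [Quaternion.imI_zero] using this
    · intro h0
      apply hij
      constructor
      · have := congrArg QuaternionAlgebra.imJ h0
        simpa [Quaternion.imJ_zero] using this
      · have := congrArg QuaternionAlgebra.imI h0
        simpa [Quaternion.imI_zero] using this
    · show q * (Quaternion.equivTuple ℝ).symm ![0, q.imJ, -q.imI, 0] = (Quaternion.equivTuple ℝ).symm ![0, q.imJ, -q.imI, 0] * star q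
      apply Quaternion.ext <;>
        (simp only [Quaternion.re_mul, Quaternion.imI_mul, Quaternion.imJ_mul, Quaternion.imK_mul]; simp;
         ring)

lemma levalQ_X_pow (α : ℍ) (n : ℕ) : levalQ α (X ^ n) = α ^ n := by
  rw [Polynomial.X_pow_eq_monomial, levalQ_monomial, mul_one]

lemma C_central_comm (c : ℍ) (hc : ∀ x : ℍ, c * x = x * c) (p : ℍ[X]) :
    C c * p = p * C c :=
  Polynomial.ext fun n => by rw [Polynomial.coeff_C_mul, Polynomial.coeff_mul_C, hc]

end Stmt12Aux


open Stmt12Aux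

set_option maxHeartbeats 1000000 in
/-- Moving a left linear factor to the right through a polynomial with no zeros
in the conjugacy class. (`Polynomial.eval` is right evaluation.) -/
theorem stmt12 (F : Polynomial (Quaternion ℝ)) (γ : Quaternion ℝ)
    (hF : ∀ δ : Quaternion ℝ, (∃ h : Quaternion ℝ, h ≠ 0 ∧ δ = h⁻¹ * γ * h) →
      levalQ δ F ≠ 0 ∧ F.eval δ ≠ 0) :
    (∃ Q : Polynomial (Quaternion ℝ),
      (X - C γ) * F =
        Q * (X - C ((levalQ (star γ) F)⁻¹ * γ * levalQ (star γ) F)) ∧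
      ∀ δ : Quaternion ℝ, (∃ h : Quaternion ℝ, h ≠ 0 ∧ δ = h⁻¹ * γ * h) →
        levalQ δ Q ≠ 0 ∧ Q.eval δ ≠ 0) ∧
    γ = F.eval ((levalQ (star γ) F)⁻¹ * γ * levalQ (star γ) F) *
          ((levalQ (star γ) F)⁻¹ * γ * levalQ (star γ) F) *
          (F.eval ((levalQ (star γ) F)⁻¹ * γ * levalQ (star γ) F))⁻¹ := by
  classical
  set a : Quaternion ℝ := levalQ (star γ) F with ha_def
  obtain ⟨h₀, h₀ne, hγstar⟩ := star_conj_exists γ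
  have hmem_star : (∃ h : Quaternion ℝ, h ≠ 0 ∧ star γ = h⁻¹ * γ * h) := ⟨h₀, h₀ne, hγstar⟩
  have ha : a ≠ 0 := (hF (star γ) hmem_star).1
  set β : Quaternion ℝ := a⁻¹ * γ * a with hβ_def
  have hmem_β : (∃ h : Quaternion ℝ, h ≠ 0 ∧ β = h⁻¹ * γ * h) := ⟨a, ha, hβ_def⟩
  have hb : F.eval β ≠ 0 := (hF β hmem_β).2
  set b : Quaternion ℝ := F.eval β with hb_def
  clear_value a β b
  have hγmem : (∃ h : Quaternion ℝ, h ≠ 0 ∧ γ = h⁻¹ * γ * h) := ⟨1, one_ne_zero, by simp⟩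
  -- ### Step B : the key commutation `γ * b = b * β`
  have hstar_a : star a = F.sum fun j fj => star fj * γ ^ j := by
    rw [ha_def]; unfold levalQ Polynomial.sum
    rw [star_sum]
    exact Finset.sum_congr rfl fun j _ => by rw [star_mul, star_pow, star_star]
  set m : Quaternion ℝ := ((Quaternion.normSq a : ℝ) : Quaternion ℝ) with hm_def
  clear_value m
  have hm_ne : m ≠ 0 := by
    rw [hm_def]
    intro h0
    apply Quaternion.normSq_ne_zero.2 ha
    apply Quaternion.coe_injective
    rw [h0, Quaternion.coe_zero]
  have hminv_comm : ∀ x : Quaternion ℝ, m⁻¹ * x = x * m⁻¹ := fun x => by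
    rw [hm_def, ← Quaternion.coe_inv, Quaternion.coe_commutes]
  have hainv : a⁻¹ = m⁻¹ * star a := by
    rw [Quaternion.inv_def, hm_def, ← Quaternion.coe_inv, Quaternion.coe_mul_eq_smul]
  set c : Quaternion ℝ := F.sum fun k fk => fk * star a * γ ^ k with hc_def
  clear_value c
  have hcγ : γ * c = c * γ := by
    have hc2 : c = ∑ k ∈ F.support, ∑ j ∈ F.support,
        F.coeff k * star (F.coeff j) * γ ^ (j + k) := by
      rw [hc_def, hstar_a]
      unfold Polynomial.sum
      refine Finset.sum_congr rfl fun k _ => ?_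
      show (F.coeff k * ∑ j ∈ F.support, star (F.coeff j) * γ ^ j) * γ ^ k
          = ∑ j ∈ F.support, F.coeff k * star (F.coeff j) * γ ^ (j + k)
      rw [Finset.mul_sum, Finset.sum_mul]
      refine Finset.sum_congr rfl fun j _ => ?_
      rw [pow_add]
      simp only [mul_assoc]
    have hsym : ∀ k j : ℕ, Commute γ
        (F.coeff k * star (F.coeff j) * γ ^ (j + k)
          + F.coeff j * star (F.coeff k) * γ ^ (k + j)) := by
      intro k j
      have h1 : F.coeff k * star (F.coeff j) * γ ^ (j + k)
          + F.coeff j * star (F.coeff k) * γ ^ (k + j)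
          = (F.coeff k * star (F.coeff j) + F.coeff j * star (F.coeff k)) * γ ^ (j + k) := by
        rw [add_mul, Nat.add_comm k j]
      rw [h1]
      refine Commute.mul_right ((selfstar_commute _ ?_ γ).symm) ((Commute.refl γ).pow_right _)
      rw [star_add, star_mul, star_star, star_mul, star_star, add_comm]
    have h2 : c + c = ∑ k ∈ F.support, ∑ j ∈ F.support,
        (F.coeff k * star (F.coeff j) * γ ^ (j + k)
          + F.coeff j * star (F.coeff k) * γ ^ (k + j)) := by
      simp only [Finset.sum_add_distrib]
      rw [hc2]
      congr 1
      exact Finset.sum_comm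
    have h3 : Commute γ (c + c) := by
      rw [h2]
      exact Commute.sum_right _ _ _ fun k _ =>
        Commute.sum_right _ _ _ fun j _ => hsym k j
    have h4 : γ * c + γ * c = c * γ + c * γ := by
      have := h3.eq
      rwa [mul_add, add_mul] at this
    have h5 : (2:ℝ) • (γ * c) = (2:ℝ) • (c * γ) := by
      rw [two_smul, two_smul]; exact h4
    exact smul_right_injective _ (two_ne_zero) h5
  have hβpow : ∀ k : ℕ, β ^ k = a⁻¹ * γ ^ k * a := by
    intro k; rw [hβ_def]; exact conj_pow a γ ha k
  have hbe : b = m⁻¹ * c * a := by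
    rw [hb_def, Polynomial.eval_eq_sum, hc_def]
    unfold Polynomial.sum
    rw [Finset.mul_sum, Finset.sum_mul]
    refine Finset.sum_congr rfl fun k _ => ?_
    show F.coeff k * β ^ k = m⁻¹ * (F.coeff k * star a * γ ^ k) * a
    rw [hβpow k, hainv]
    simp only [mul_assoc]
    rw [← mul_assoc, ← hminv_comm, mul_assoc]
  have hγb : γ * b = b * β := by
    rw [hbe, hβ_def]
    simp only [mul_assoc]
    rw [← mul_assoc a a⁻¹, mul_inv_cancel₀ ha, one_mul]
    rw [← mul_assoc γ m⁻¹, ← hminv_comm, mul_assoc]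
    rw [← mul_assoc γ c, hcγ, mul_assoc]
  have hconj : γ = b * β * b⁻¹ := by
    rw [← hγb, mul_assoc, mul_inv_cancel₀ hb, mul_one]
  -- ### Step C/D : factor out the right root β
  obtain ⟨Q, hQ0⟩ := exists_factor_right ((X - C γ) * F) β
  have hGβ : ((X - C γ) * F).eval β = 0 := by
    have hexp : ((X - C γ) * F).eval β = b * β - γ * b := by
      rw [sub_mul, Polynomial.X_mul, eval_sub, eval_mul_X, eval_C_mul, hb_def]
    rw [hexp, ← hγb, sub_self]
  rw [hGβ, map_zero, add_zero] at hQ0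
  -- trace and norm facts for β
  have htβ : β + star β = γ + star γ := by rw [hβ_def]; exact conj_trace γ a ha
  have hnβ : star β * β = star γ * γ := by rw [hβ_def]; exact conj_normSq γ a ha
  -- ### no left zeros of Q in the conjugacy class
  have Nleft : ∀ δ : Quaternion ℝ, (∃ h : Quaternion ℝ, h ≠ 0 ∧ δ = h⁻¹ * γ * h) →
      levalQ δ Q ≠ 0 := by
    rintro δ ⟨h, hh, hδ⟩ hzl
    have hδG : levalQ δ ((X - C γ) * F) = 0 := by
      rw [hQ0, levalQ_mul_X_sub_C, hzl, mul_zero, zero_mul, sub_zero]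
    by_cases hδγ : δ = γ
    · obtain ⟨R, hR⟩ := exists_factor_left Q γ
      rw [hδγ] at hzl
      rw [hzl, map_zero, add_zero] at hR
      have hF' : F = R * (X - C β) := by
        apply mul_left_cancel₀ (Polynomial.X_sub_C_ne_zero γ)
        rw [← mul_assoc, ← hR, hQ0]
      have hzero : F.eval β = 0 := by
        rw [hF', eval_mul_sum]
        unfold Polynomial.sum
        refine Finset.sum_eq_zero fun j _ => ?_
        simp only [eval_sub, eval_X, eval_C, sub_self, mul_zero, zero_mul]
      rw [← hb_def] at hzero
      exact hb hzero
    · have hδγ0 : δ - γ ≠ 0 := sub_ne_zero.2 hδγ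
      have hcu : δ * (δ - γ) = (δ - γ) * ((δ - γ)⁻¹ * δ * (δ - γ)) := by
        simp only [← mul_assoc]
        rw [mul_inv_cancel₀ hδγ0, one_mul]
      have hconj' := levalQ_mul_conj δ ((δ - γ)⁻¹ * δ * (δ - γ)) (δ - γ) (X - C γ) F
        (levalQ_X_sub_C δ γ) hcu
      rw [hδG] at hconj'
      have hzero : levalQ ((δ - γ)⁻¹ * δ * (δ - γ)) F = 0 := by
        rcases mul_eq_zero.1 hconj'.symm with h | h
        · exact absurd h hδγ0
        · exact h
      have hmem' : ∃ h' : Quaternion ℝ, h' ≠ 0 ∧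
          (δ - γ)⁻¹ * δ * (δ - γ) = h'⁻¹ * γ * h' := by
        refine ⟨h * (δ - γ), mul_ne_zero hh hδγ0, ?_⟩
        rw [mul_inv_rev, hδ]
        simp only [mul_assoc]
      exact (hF _ hmem').1 hzero
  -- ### no right zeros of Q in the conjugacy class
  have Nright : ∀ δ : Quaternion ℝ, (∃ h : Quaternion ℝ, h ≠ 0 ∧ δ = h⁻¹ * γ * h) →
      Q.eval δ ≠ 0 := by
    rintro δ ⟨h, hh, hδ⟩ hzr
    obtain ⟨R, hR⟩ := exists_factor_right Q δ
    rw [hzr, map_zero, add_zero] at hR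
    have htδ : δ + star δ = γ + star γ := by rw [hδ]; exact conj_trace γ h hh
    have hnδ : star δ * δ = star γ * γ := by rw [hδ]; exact conj_normSq γ h hh
    by_cases hδβ : δ = star β
    · -- the characteristic polynomial case
      have hΨ1 : (X - C δ) * (X - C β)
          = X ^ 2 - C (γ + star γ) * X + C (star γ * γ) := by
        rw [lin_mul_lin, hδβ,
          show star β + β = γ + star γ by rw [add_comm]; exact htβ,
          show star β * β = star γ * γ from hnβ]
      have hΨ2 : (X - C γ) * (X - C (star γ))
          = X ^ 2 - C (γ + star γ) * X + C (star γ * γ) := by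
        rw [lin_mul_lin,
          show γ * star γ = star γ * γ by
            rw [Quaternion.self_mul_star, Quaternion.star_mul_self]]
      have htc : ∀ x : Quaternion ℝ, (γ + star γ) * x = x * (γ + star γ) := fun x =>
        selfstar_commute _ (by rw [star_add, star_star, add_comm]) x
      have hnc : ∀ x : Quaternion ℝ, (star γ * γ) * x = x * (star γ * γ) := fun x =>
        selfstar_commute _ (by rw [star_mul, star_star]) x
      have hcomm : (X ^ 2 - C (γ + star γ) * X + C (star γ * γ)) * R
          = R * (X ^ 2 - C (γ + star γ) * X + C (star γ * γ)) := by
        have e1 : Commute (X ^ 2 : Polynomial (Quaternion ℝ)) R :=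
          (Polynomial.commute_X R).pow_left 2
        have e2 : Commute (C (γ + star γ) * X) R :=
          Commute.mul_left (C_central_comm _ htc R) (Polynomial.commute_X R)
        have e3 : Commute (C (star γ * γ)) R := C_central_comm _ hnc R
        exact ((e1.sub_left e2).add_left e3).eq
      have hQΨ : (X - C γ) * F = R * ((X - C δ) * (X - C β)) := by
        rw [hQ0, hR, mul_assoc]
      have hF' : F = (X - C (star γ)) * R := by
        apply mul_left_cancel₀ (Polynomial.X_sub_C_ne_zero γ)
        rw [hQΨ, hΨ1, ← mul_assoc, hΨ2, hcomm]
      have hzero : levalQ (star γ) F = 0 := by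
        rw [hF', levalQ_mul]
        unfold Polynomial.sum
        refine Finset.sum_eq_zero fun k _ => ?_
        simp only [levalQ_X_sub_C, sub_self, mul_zero, zero_mul]
      rw [← ha_def] at hzero
      exact ha hzero
    · -- δ ≠ star β
      have hlG : levalQ γ ((X - C γ) * F) = 0 := by
        rw [levalQ_mul]
        unfold Polynomial.sum
        refine Finset.sum_eq_zero fun k _ => ?_
        simp only [levalQ_X_sub_C, sub_self, mul_zero, zero_mul]
      have hGRP : (X - C γ) * F = R * ((X - C δ) * (X - C β)) := by
        rw [hQ0, hR, mul_assoc]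
      by_cases hu : levalQ γ R = 0
      · obtain ⟨S, hS⟩ := exists_factor_left R γ
        rw [hu, map_zero, add_zero] at hS
        have hF' : F = S * ((X - C δ) * (X - C β)) := by
          apply mul_left_cancel₀ (Polynomial.X_sub_C_ne_zero γ)
          rw [hGRP, hS]
          simp only [mul_assoc]
        have hzero : F.eval β = 0 := by
          rw [hF', ← mul_assoc, eval_mul_sum]
          unfold Polynomial.sum
          refine Finset.sum_eq_zero fun j _ => ?_
          simp only [eval_sub, eval_X, eval_C, sub_self, mul_zero, zero_mul]
        rw [← hb_def] at hzero
        exact hb hzero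
      · set u : Quaternion ℝ := levalQ γ R with hu_def
        clear_value u
        set γ' : Quaternion ℝ := u⁻¹ * γ * u with hγ'_def
        clear_value γ'
        have hcu : γ * u = u * γ' := by
          rw [hγ'_def]
          simp only [← mul_assoc]
          rw [mul_inv_cancel₀ hu, one_mul]
        have h0 : levalQ γ' ((X - C δ) * (X - C β)) = 0 := by
          have hmc := levalQ_mul_conj γ γ' u R ((X - C δ) * (X - C β)) hu_def.symm hcu
          rw [hGRP] at hlG
          rw [hmc] at hlG
          rcases mul_eq_zero.1 hlG with h' | h'
          · exact absurd h' hu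
          · exact h'
        have htγ' : γ' + star γ' = γ + star γ := by rw [hγ'_def]; exact conj_trace γ u hu
        have hnγ' : star γ' * γ' = star γ * γ := by rw [hγ'_def]; exact conj_normSq γ u hu
        have hstarδ : star δ = (γ + star γ) - δ := eq_sub_of_add_eq' htδ
        have hnδ' : star γ * γ = δ * ((γ + star γ) - δ) := by
          rw [← hstarδ, ← hnδ, Quaternion.star_mul_self, Quaternion.self_mul_star]
        have htc : (γ + star γ) * γ' = γ' * (γ + star γ) :=
          selfstar_commute _ (by rw [star_add, star_star, add_comm]) γ'
        have hsq : γ' ^ 2 = (γ + star γ) * γ' - star γ * γ := by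
          rw [← htγ', ← hnγ', add_mul, add_sub_cancel_right, sq]
        have hval : levalQ γ' ((X - C δ) * (X - C β)) = (γ' - δ) * (star δ - β) := by
          rw [lin_mul_lin, levalQ_add, levalQ_sub, levalQ_C, levalQ_X_pow]
          have hCX : levalQ γ' (C (δ + β) * X) = γ' * (δ + β) := levalQ_C_mul_X γ' (δ + β)
          rw [hCX, hsq, hstarδ, hnδ', htc]
          noncomm_ring
        rw [hval] at h0
        rcases mul_eq_zero.1 h0 with h' | h'
        · have hγ'δ : γ' = δ := by rwa [sub_eq_zero] at h'
          have hQz : levalQ γ Q = 0 := by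
            rw [hR, levalQ_mul_X_sub_C, ← hu_def, ← hγ'δ, hγ'_def]
            simp only [← mul_assoc]
            rw [mul_inv_cancel₀ hu, one_mul, sub_self]
          exact Nleft γ hγmem hQz
        · have hsb : star δ = β := by rwa [sub_eq_zero] at h'
          exact hδβ (by rw [← hsb, star_star])
  exact ⟨⟨Q, hQ0, fun δ hδ => ⟨Nleft δ hδ, Nright δ hδ⟩⟩, hconj⟩
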